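/- Let f : (0,∞) → [0,∞) be differentiable, decreasing, with ∫₀^∞ min(1,r) f(r) dr < ∞. Then the measure Π(dr) on (0,∞) with density e^{-r}(f(r) - f'(r)) satisfies ∫₀^∞ min(r, r²) Π(dr) < ∞. -/

import Mathlib

open MeasureTheory Real Set Filter Topology

lemma aux_deriv_nonpos (f : ℝ → ℝ)
    (hf_diff : ∀ r ∈ Ioi (0:ℝ), DifferentiableAt ℝ f r)
    (hf_anti : AntitoneOn f (Ioi 0)) {r : ℝ} (hr : (0:ℝ) < r) : deriv f r ≤ 0 := by
  have hd := (hf_diff r hr).hasDerivAt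
  rw [hasDerivAt_iff_tendsto_slope] at hd
  have hd' : Tendsto (slope f r) (𝓝[>] r) (𝓝 (deriv f r)) :=
    hd.mono_left (nhdsWithin_mono _ (fun y hy => by simpa using ne_of_gt (hy : r < y)))
  refine le_of_tendsto hd' ?_
  filter_upwards [self_mem_nhdsWithin] with y hy
  have hy' : r < y := hy
  have hfy : f y ≤ f r := hf_anti hr (hr.trans hy') hy'.le
  rw [slope_def_field]
  exact div_nonpos_of_nonpos_of_nonneg (by linarith) (by linarith)

lemma aux_w_nonneg {r : ℝ} (hr : 0 < r) : 0 ≤ min r (r ^ 2) * exp (-r) :=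
  mul_nonneg (le_min hr.le (by positivity)) (exp_pos _).le

lemma aux_w_le_min {r : ℝ} (hr : 0 < r) : min r (r ^ 2) * exp (-r) ≤ min 1 r := by
  have he1 : exp (-r) ≤ 1 := by
    calc exp (-r) ≤ exp 0 := exp_le_exp.mpr (by linarith)
    _ = 1 := exp_zero
  rcases le_total r 1 with h | h
  · rw [min_eq_right (by nlinarith : r ^ 2 ≤ r), min_eq_right h]
    nlinarith [exp_pos (-r)]
  · rw [min_eq_left (by nlinarith : r ≤ r ^ 2), min_eq_left h]
    have h2 : r ≤ exp r := by linarith [add_one_le_exp r]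
    have := mul_le_mul_of_nonneg_right h2 (exp_pos (-r)).le
    rwa [← exp_add, add_neg_cancel, exp_zero] at this

lemma aux_w_le_sq {r : ℝ} (hr0 : 0 < r) (hr1 : r ≤ 1) : min r (r ^ 2) * exp (-r) ≤ r ^ 2 := by
  have he1 : exp (-r) ≤ 1 := by
    calc exp (-r) ≤ exp 0 := exp_le_exp.mpr (by linarith)
    _ = 1 := exp_zero
  rw [min_eq_right (by nlinarith : r ^ 2 ≤ r)]
  nlinarith [exp_pos (-r)]

lemma aux_w_le_one {r : ℝ} (hr : 1 ≤ r) : min r (r ^ 2) * exp (-r) ≤ 1 := by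
  have := aux_w_le_min (by linarith : (0:ℝ) < r)
  rw [min_eq_left hr] at this
  exact this

lemma aux_tendsto (f : ℝ → ℝ)
    (hf_nonneg : ∀ r ∈ Ioi (0:ℝ), 0 ≤ f r)
    (hf_anti : AntitoneOn f (Ioi 0)) : ∃ l, Tendsto f atTop (𝓝 l) := by
  set F : ℝ → ℝ := fun r => f (max r 1) with hF
  have hmem : ∀ x : ℝ, max x 1 ∈ Ioi (0:ℝ) := fun x => mem_Ioi.mpr (lt_of_lt_of_le one_pos (le_max_right _ _))
  have hFanti : Antitone F := fun x y hxy =>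
    hf_anti (hmem x) (hmem y) (max_le_max hxy le_rfl)
  have hbdd : BddBelow (range F) := by
    refine ⟨0, ?_⟩
    rintro z ⟨x, rfl⟩
    exact hf_nonneg _ (hmem x)
  refine ⟨_, (tendsto_atTop_ciInf hFanti hbdd).congr' ?_⟩
  filter_upwards [Filter.eventually_ge_atTop (1:ℝ)] with x hx
  simp [hF, max_eq_left hx]

lemma aux_tail (f : ℝ → ℝ)
    (hf_nonneg : ∀ r ∈ Ioi (0:ℝ), 0 ≤ f r)
    (hf_diff : ∀ r ∈ Ioi (0:ℝ), DifferentiableAt ℝ f r)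
    (hf_anti : AntitoneOn f (Ioi 0)) :
    IntegrableOn (fun r => -deriv f r) (Ioi 1) := by
  obtain ⟨l, hl⟩ := aux_tendsto f hf_nonneg hf_anti
  apply integrableOn_Ioi_deriv_of_nonneg (g := fun r => -f r) (l := -l)
  · exact ((hf_diff 1 (mem_Ioi.mpr one_pos)).continuousAt.neg).continuousWithinAt
  · intro x hx
    exact ((hf_diff x (mem_Ioi.mpr (lt_trans one_pos hx))).hasDerivAt).neg
  · intro x hx
    simpa using aux_deriv_nonpos f hf_diff hf_anti (lt_trans one_pos hx)
  · exact hl.neg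

lemma aux_hTf (f : ℝ → ℝ)
    (hf_int : IntegrableOn (fun r => min 1 r * f r) (Ioi 0)) :
    IntegrableOn (fun t => t * f t) (Ioc 0 1) := by
  have h : IntegrableOn (fun r => min 1 r * f r) (Ioc (0:ℝ) 1) := hf_int.mono_set Ioc_subset_Ioi_self
  refine h.congr_fun ?_ measurableSet_Ioc
  intro t ht
  simp [min_eq_right ht.2]

lemma aux_cube (f : ℝ → ℝ)
    (hf_nonneg : ∀ r ∈ Ioi (0:ℝ), 0 ≤ f r)
    (hf_anti : AntitoneOn f (Ioi 0))
    (hf_int : IntegrableOn (fun r => min 1 r * f r) (Ioi 0))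
    {a : ℝ} (ha0 : 0 < a) (ha1 : a ≤ 1) :
    a ^ 2 * f a ≤ 8 / 3 * ∫ t in Ioc (0:ℝ) 1, t * f t := by
  have hTf := aux_hTf f hf_int
  have hfa0 : 0 ≤ f a := hf_nonneg a ha0
  have hsub : Ioc (a/2) a ⊆ Ioc (0:ℝ) 1 := Ioc_subset_Ioc (by linarith) ha1
  have hint1 : IntegrableOn (fun t => t * f a) (Ioc (a/2) a) :=
    (continuous_id.mul continuous_const).integrableOn_Ioc
  have hmono : ∫ t in Ioc (a/2) a, t * f a ≤ ∫ t in Ioc (a/2) a, t * f t := by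
    refine setIntegral_mono_on hint1 (hTf.mono_set hsub) measurableSet_Ioc ?_
    intro t ht
    have ht0 : (0:ℝ) < t := lt_trans (by linarith) ht.1
    exact mul_le_mul_of_nonneg_left (hf_anti (mem_Ioi.mpr ht0) (mem_Ioi.mpr ha0) ht.2) ht0.le
  have hval2 : ∫ t in Ioc (a/2) a, t * f a = 3/8 * a ^ 2 * f a := by
    rw [MeasureTheory.integral_mul_const]
    have : ∫ t in Ioc (a/2) a, (t:ℝ) = 3/8 * a ^ 2 := by
      rw [← intervalIntegral.integral_of_le (by linarith : a/2 ≤ a), integral_id]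
      ring
    rw [this]
  have hle : ∫ t in Ioc (a/2) a, t * f t ≤ ∫ t in Ioc (0:ℝ) 1, t * f t := by
    refine setIntegral_mono_set hTf ?_ (HasSubset.Subset.eventuallyLE hsub)
    filter_upwards [ae_restrict_mem measurableSet_Ioc] with t ht
    exact mul_nonneg ht.1.le (hf_nonneg t ht.1)
  nlinarith [hmono, hle, hval2]

lemma aux_key (f : ℝ → ℝ)
    (hf_nonneg : ∀ r ∈ Ioi (0:ℝ), 0 ≤ f r)
    (hf_diff : ∀ r ∈ Ioi (0:ℝ), DifferentiableAt ℝ f r)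
    (hf_anti : AntitoneOn f (Ioi 0))
    (hf_int : IntegrableOn (fun r => min 1 r * f r) (Ioi 0))
    {a : ℝ} (ha0 : 0 < a) (ha1 : a ≤ 1) :
    IntegrableOn (fun r => min r (r ^ 2) * exp (-r) * (-deriv f r)) (Ioc a 1) ∧
    ∫ r in Ioc a 1, ‖min r (r ^ 2) * exp (-r) * (-deriv f r)‖ ≤
      14 / 3 * ∫ t in Ioc (0:ℝ) 1, t * f t := by
  set C₀ := ∫ t in Ioc (0:ℝ) 1, t * f t with hC₀
  have hfc : ContinuousOn f (Ioi 0) :=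
    fun r hr => (hf_diff r hr).continuousAt.continuousWithinAt
  have hTf := aux_hTf f hf_int
  have h2tf : IntegrableOn (fun t => 2 * (t * f t)) (Ioc (0:ℝ) 1) := hTf.const_mul 2
  set P : ℝ → ℝ := fun r => ∫ t in (0:ℝ)..r, 2 * (t * f t) with hP
  have hPd : ∀ r ∈ Ioc (0:ℝ) 1, HasDerivAt P (2 * (r * f r)) r := by
    intro r hr
    apply intervalIntegral.integral_hasDerivAt_right
    · rw [intervalIntegrable_iff_integrableOn_Ioc_of_le hr.1.le]
      exact h2tf.mono_set (Ioc_subset_Ioc le_rfl hr.2)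
    · exact ⟨Ioi 0, isOpen_Ioi.mem_nhds hr.1,
        ((continuousOn_const.mul (continuousOn_id.mul hfc))).aestronglyMeasurable
          measurableSet_Ioi⟩
    · exact continuousAt_const.mul
        (continuousAt_id.mul (hf_diff r hr.1).continuousAt)
  have hgd : ∀ r ∈ Ioc (0:ℝ) 1, HasDerivAt (fun x => P x - x ^ 2 * f x)
      (-(r ^ 2 * deriv f r)) r := by
    intro r hr
    have h1 : HasDerivAt (fun x : ℝ => x ^ 2 * f x)
        ((2:ℕ) * r ^ 1 * f r + r ^ 2 * deriv f r) r :=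
      (hasDerivAt_pow 2 r).mul (hf_diff r hr.1).hasDerivAt
    have h2 := (hPd r hr).sub h1
    refine h2.congr_deriv ?_
    push_cast
    ring
  have hcont : ContinuousOn (fun x => P x - x ^ 2 * f x) (Icc a 1) := by
    intro x hx
    exact (hgd x ⟨lt_of_lt_of_le ha0 hx.1, hx.2⟩).continuousAt.continuousWithinAt
  have hnonpos : ∀ r ∈ Ioo a 1, deriv f r ≤ 0 := fun r hr =>
    aux_deriv_nonpos f hf_diff hf_anti (lt_trans ha0 hr.1)
  have g'_int : IntegrableOn (fun r => -(r ^ 2 * deriv f r)) (Ioc a 1) := by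
    apply intervalIntegral.integrableOn_deriv_of_nonneg hcont
    · intro x hx
      exact hgd x ⟨lt_trans ha0 hx.1, hx.2.le⟩
    · intro x hx
      have := hnonpos x hx
      nlinarith
  have hval : ∫ r in Ioc a 1, -(r ^ 2 * deriv f r)
      = (P 1 - 1 ^ 2 * f 1) - (P a - a ^ 2 * f a) := by
    rw [← intervalIntegral.integral_of_le ha1]
    have h3 := intervalIntegral.integral_eq_sub_of_hasDerivAt
      (f := fun x => P x - x ^ 2 * f x) (f' := fun r => -(r ^ 2 * deriv f r))
      (a := a) (b := 1) ?_ ?_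
    · exact h3
    · intro x hx
      rw [uIcc_of_le ha1] at hx
      exact hgd x ⟨lt_of_lt_of_le ha0 hx.1, hx.2⟩
    · rw [intervalIntegrable_iff_integrableOn_Ioc_of_le ha1]
      exact g'_int
  have hPa : 0 ≤ P a := by
    apply intervalIntegral.integral_nonneg ha0.le
    intro u hu
    rcases hu.1.eq_or_lt with h | h
    · simp [← h]
    · have := hf_nonneg u h
      positivity
  have hP1 : P 1 = 2 * C₀ := by
    show (∫ t in (0:ℝ)..(1:ℝ), 2 * (t * f t)) = 2 * C₀
    rw [intervalIntegral.integral_of_le (by norm_num : (0:ℝ) ≤ 1), hC₀,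
      ← MeasureTheory.integral_const_mul]
  have hcube := aux_cube f hf_nonneg hf_anti hf_int ha0 ha1
  have hf1 : 0 ≤ f 1 := hf_nonneg 1 (mem_Ioi.mpr one_pos)
  have hbound : ∫ r in Ioc a 1, -(r ^ 2 * deriv f r) ≤ 14 / 3 * C₀ := by
    rw [hval]
    nlinarith
  have hptwise : ∀ r ∈ Ioc a 1,
      ‖min r (r ^ 2) * exp (-r) * (-deriv f r)‖ ≤ -(r ^ 2 * deriv f r) := by
    intro r hr
    have hr0 : 0 < r := lt_trans ha0 hr.1
    have hd : deriv f r ≤ 0 := aux_deriv_nonpos f hf_diff hf_anti hr0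
    have hw2 : min r (r ^ 2) * exp (-r) ≤ r ^ 2 := aux_w_le_sq hr0 hr.2
    have hwn : 0 ≤ min r (r ^ 2) * exp (-r) := aux_w_nonneg hr0
    rw [Real.norm_eq_abs, abs_of_nonneg (mul_nonneg hwn (by linarith))]
    nlinarith
  have hmeas : AEStronglyMeasurable (fun r => min r (r ^ 2) * exp (-r) * (-deriv f r))
      (volume.restrict (Ioc a 1)) :=
    ((((continuous_id.min (continuous_pow 2)).mul
      (Real.continuous_exp.comp continuous_neg)).measurable).mul
      (measurable_deriv f).neg).aestronglyMeasurable
  have hh_int : IntegrableOn (fun r => min r (r ^ 2) * exp (-r) * (-deriv f r)) (Ioc a 1) := by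
    apply Integrable.mono' g'_int hmeas
    filter_upwards [ae_restrict_mem measurableSet_Ioc] with r hr
    exact hptwise r hr
  refine ⟨hh_int, ?_⟩
  refine le_trans (setIntegral_mono_on hh_int.norm g'_int measurableSet_Ioc ?_) hbound
  intro r hr
  simpa using hptwise r hr


/-- If `f : (0,∞) → [0,∞)` is differentiable, decreasing and satisfies
`∫₀^∞ min(1,r) f(r) dr < ∞`, then the measure with density `e^{-r}(f(r) - f'(r))` on `(0,∞)`
integrates `min(r, r²)`. -/
theorem stmt1 (f : ℝ → ℝ)
    (hf_nonneg : ∀ r ∈ Ioi (0:ℝ), 0 ≤ f r)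
    (hf_diff : ∀ r ∈ Ioi (0:ℝ), DifferentiableAt ℝ f r)
    (hf_anti : AntitoneOn f (Ioi 0))
    (hf_int : IntegrableOn (fun r => min 1 r * f r) (Ioi 0)) :
    IntegrableOn (fun r => min r (r ^ 2) * (exp (-r) * (f r - deriv f r))) (Ioi 0) := by
  have hfc : ContinuousOn f (Ioi 0) :=
    fun r hr => (hf_diff r hr).continuousAt.continuousWithinAt
  have hwmeas : Measurable fun r : ℝ => min r (r ^ 2) * exp (-r) :=
    ((continuous_id.min (continuous_pow 2)).mul
      (Real.continuous_exp.comp continuous_neg)).measurable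
  -- part 1 : the `f` part
  have hI1 : IntegrableOn (fun r => min r (r ^ 2) * exp (-r) * f r) (Ioi 0) := by
    apply Integrable.mono' hf_int
    · exact hwmeas.aestronglyMeasurable.mul
        (hfc.aestronglyMeasurable measurableSet_Ioi)
    · filter_upwards [ae_restrict_mem measurableSet_Ioi] with r hr
      have h0 : 0 ≤ f r := hf_nonneg r hr
      have hwn : 0 ≤ min r (r ^ 2) * exp (-r) := aux_w_nonneg hr
      rw [Real.norm_eq_abs, abs_of_nonneg (mul_nonneg hwn h0)]
      exact mul_le_mul_of_nonneg_right (aux_w_le_min hr) h0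
  -- part 2 : the `-deriv f` part on `(1,∞)`
  have hItail : IntegrableOn (fun r => min r (r ^ 2) * exp (-r) * (-deriv f r)) (Ioi 1) := by
    apply Integrable.mono' (aux_tail f hf_nonneg hf_diff hf_anti)
    · exact (hwmeas.mul (measurable_deriv f).neg).aestronglyMeasurable
    · filter_upwards [ae_restrict_mem measurableSet_Ioi] with r hr
      have hr0 : (0:ℝ) < r := lt_trans one_pos hr
      have hd : deriv f r ≤ 0 := aux_deriv_nonpos f hf_diff hf_anti hr0
      have hwn : 0 ≤ min r (r ^ 2) * exp (-r) := aux_w_nonneg hr0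
      have hw1 : min r (r ^ 2) * exp (-r) ≤ 1 := aux_w_le_one (le_of_lt hr)
      rw [Real.norm_eq_abs, abs_of_nonneg (mul_nonneg hwn (by linarith))]
      nlinarith
  -- part 2 : the `-deriv f` part on `(0,1]`
  have hI2a : IntegrableOn (fun r => min r (r ^ 2) * exp (-r) * (-deriv f r)) (Ioc 0 1) := by
    have hpos : ∀ n : ℕ, (0:ℝ) < 1 / (n + 1) := by
      intro n; positivity
    have hle1 : ∀ n : ℕ, (1:ℝ) / (n + 1) ≤ 1 := by
      intro n
      rw [div_le_one (by positivity)]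
      linarith [Nat.cast_nonneg (α := ℝ) n]
    apply integrableOn_Ioc_of_intervalIntegral_norm_bounded_left
      (l := atTop) (I := 14 / 3 * ∫ t in Ioc (0:ℝ) 1, t * f t) (a := fun n : ℕ => 1 / (n + 1))
    · exact fun n =>
        (aux_key f hf_nonneg hf_diff hf_anti hf_int (hpos n) (hle1 n)).1
    · exact tendsto_one_div_add_atTop_nhds_zero_nat
    · exact Eventually.of_forall fun n =>
        (aux_key f hf_nonneg hf_diff hf_anti hf_int (hpos n) (hle1 n)).2
  have hI2 : IntegrableOn (fun r => min r (r ^ 2) * exp (-r) * (-deriv f r)) (Ioi 0) := by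
    rw [← Ioc_union_Ioi_eq_Ioi (zero_le_one (α := ℝ))]
    exact hI2a.union hItail
  have hsum := hI1.add hI2
  refine hsum.congr ?_
  apply Filter.Eventually.of_forall
  intro r
  simp only [Pi.add_apply]
  ring
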